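/- Off-origin averaging estimate for power weights: Let 1 < p < q < ∞, ω(k) = |k|^β (k ≠ 0), ω(0) = 1, and x a nonnegative sequence with finite l^p_q(ω) Morrey norm. For every symmetric interval S_{m,N} with |m| ≥ 1 and N ≤ ⌊|m|/2⌋, one has (1/|S_{m,N}|) Σ_{k∈S_{m,N}} x(k) ≤ C |m|^{−β/q} |S_{m,N}|^{−1/q} ‖x‖_{l^p_q(ω)}, for arbitrary real β. -/
import Mathlib


open Finset MeasureTheory
open scoped Classical

noncomputable section

/-- The symmetric interval `S_{m,N} = {k : |k - m| ≤ N}` as a finite set. -/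
def Sint (m : ℤ) (N : ℕ) : Finset ℤ := Finset.Icc (m - N) (m + N)

/-- `w(S) = Σ_{k ∈ S} w(k)`. -/
def wSum (w : ℤ → ℝ) (s : Finset ℤ) : ℝ := ∑ k ∈ s, w k

/-- Discrete weighted Morrey norm `‖x‖_{l^p_q(w,v)}`. -/
def morreyNorm (p q : ℝ) (w v : ℤ → ℝ) (x : ℤ → ℝ) : ℝ :=
  ⨆ mN : ℤ × ℕ, (wSum v (Sint mN.1 mN.2)) ^ (1/q - 1/p) *
    (∑ k ∈ Sint mN.1 mN.2, |x k| ^ p * w k) ^ (1/p)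

/-- The discrete weighted Hardy–Littlewood maximal operator `M_w`. -/
def maxW (w x : ℤ → ℝ) (m : ℤ) : ℝ :=
  ⨆ N : ℕ, (wSum w (Sint m N))⁻¹ * ∑ k ∈ Sint m N, |x k| * w k

/-- The discrete (unweighted) Hardy–Littlewood maximal operator `M`. -/
def maxHL (x : ℤ → ℝ) (m : ℤ) : ℝ :=
  ⨆ N : ℕ, ((2 * N + 1 : ℕ) : ℝ)⁻¹ * ∑ k ∈ Sint m N, |x k|

/-- The discrete power weight `w(k) = |k|^β` for `k ≠ 0`, `w(0) = 1`. -/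
def powerWeight (β : ℝ) : ℤ → ℝ := fun k => if k = 0 then 1 else |(k : ℝ)| ^ β

lemma pw_nonneg (β : ℝ) (k : ℤ) : 0 ≤ powerWeight β k := by
  unfold powerWeight; split
  · norm_num
  · positivity

lemma pw_lb (β a b : ℝ) (ha : 0 < a) (hb : 0 < b) (h1 : a ≤ 2*b) (h2 : b ≤ 2*a) :
    2^(-|β|) * a^β ≤ b^β := by
  rcases le_or_gt 0 β with hβ | hβ
  · rw [abs_of_nonneg hβ]
    have hd : a/2 ≤ b := by linarith
    calc (2:ℝ)^(-β) * a^β = (a/2)^β := by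
          rw [Real.div_rpow ha.le (by norm_num), Real.rpow_neg (by norm_num)]
          rw [div_eq_mul_inv]; ring
      _ ≤ b^β := Real.rpow_le_rpow (by positivity) hd hβ
  · rw [abs_of_neg hβ, neg_neg]
    calc (2:ℝ)^β * a^β = (2*a)^β := (Real.mul_rpow (by norm_num) ha.le).symm
      _ ≤ b^β := Real.rpow_le_rpow_of_nonpos hb h2 hβ.le

lemma pw_ub (β a b : ℝ) (ha : 0 < a) (hb : 0 < b) (h1 : a ≤ 2*b) (h2 : b ≤ 2*a) :
    b^β ≤ 2^(|β|) * a^β := by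
  rcases le_or_gt 0 β with hβ | hβ
  · rw [abs_of_nonneg hβ]
    calc b^β ≤ (2*a)^β := Real.rpow_le_rpow hb.le h2 hβ
      _ = 2^β * a^β := Real.mul_rpow (by norm_num) ha.le
  · rw [abs_of_neg hβ]
    have hd : a/2 ≤ b := by linarith
    calc b^β ≤ (a/2)^β := Real.rpow_le_rpow_of_nonpos (by positivity) hd hβ.le
      _ = 2^(-β) * a^β := by
          rw [Real.div_rpow ha.le (by norm_num), Real.rpow_neg (by norm_num)]
          rw [div_eq_mul_inv]; ring

lemma scalar_eq (p q β a n : ℝ) (ha : 0 < a) (hn : 0 < n) :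
  n⁻¹ * n^(1-1/p) * ((2^(-|β|) * a^β)⁻¹)^(1/p) * ((2^(|β|) * a^β * n)^(1/p-1/q)) =
  2 ^ (|β| * (1/p) + |β| * (1/p - 1/q)) * a^(-(β/q)) * n^(-(1/q)) := by
  have hL : (0:ℝ) < n⁻¹ * n^(1-1/p) * ((2^(-|β|) * a^β)⁻¹)^(1/p) * ((2^(|β|) * a^β * n)^(1/p-1/q)) := by positivity
  have hR : (0:ℝ) < 2 ^ (|β| * (1/p) + |β| * (1/p - 1/q)) * a^(-(β/q)) * n^(-(1/q)) := by positivity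
  rw [← Real.exp_log hL, ← Real.exp_log hR]
  congr 1
  simp (disch := positivity) only [Real.log_mul, Real.log_inv, Real.log_rpow]
  ring

/-- off-origin averaging estimate for power weights, for symmetric intervals
`S_{m,N}` with `|m| ≥ 1` and `N ≤ ⌊|m|/2⌋`. -/
theorem stmt19 (p q β : ℝ) (hp : 1 < p) (hpq : p < q) :
    ∃ C > 0, ∀ x : ℤ → ℝ, (∀ k, 0 ≤ x k) →
      BddAbove (Set.range fun mN : ℤ × ℕ =>
        (wSum (powerWeight β) (Sint mN.1 mN.2)) ^ (1/q - 1/p) *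
          (∑ k ∈ Sint mN.1 mN.2, |x k| ^ p * powerWeight β k) ^ (1/p)) →
      ∀ (m : ℤ) (N : ℕ), 1 ≤ |m| → 2 * (N : ℤ) ≤ |m| →
        ((2 * N + 1 : ℕ) : ℝ)⁻¹ * ∑ k ∈ Sint m N, x k ≤
          C * |(m : ℝ)| ^ (-(β/q)) * ((2 * N + 1 : ℕ) : ℝ) ^ (-(1/q)) *
            morreyNorm p q (powerWeight β) (powerWeight β) x := by
  have hp0 : 0 < p := lt_trans one_pos hp
  have hq0 : 0 < q := lt_trans hp0 hpq
  have he : 0 < 1/p - 1/q := by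
    rw [sub_pos]
    exact one_div_lt_one_div_of_lt hp0 hpq
  refine ⟨(2:ℝ) ^ (|β| * (1/p) + |β| * (1/p - 1/q)), Real.rpow_pos_of_pos two_pos _, ?_⟩
  intro x hx hBdd m N hm1 hmN
  set M : ℝ := morreyNorm p q (powerWeight β) (powerWeight β) x with hMdef
  set a : ℝ := |(m:ℝ)| with haDef
  have ha1 : (1:ℝ) ≤ a := by
    rw [haDef, ← Int.cast_abs]
    exact_mod_cast hm1
  have ha : 0 < a := lt_of_lt_of_le one_pos ha1
  set n : ℝ := ((2*N+1 : ℕ) : ℝ) with hnDef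
  have hn : 0 < n := by positivity
  -- integer facts about members of Sint m N
  have hmemZ : ∀ k ∈ Sint m N, k ≠ 0 ∧ |m| ≤ 2 * |k| ∧ |k| ≤ 2 * |m| := by
    intro k hk
    simp only [Sint, Finset.mem_Icc] at hk
    have h1 := hm1; have h2 := hmN
    simp only [Int.abs_eq_natAbs] at h1 h2 ⊢
    refine ⟨?_, ?_, ?_⟩ <;> omega
  -- real bounds
  have hmemR : ∀ k ∈ Sint m N, (0:ℝ) < |(k:ℝ)| ∧ a ≤ 2 * |(k:ℝ)| ∧ |(k:ℝ)| ≤ 2 * a := by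
    intro k hk
    obtain ⟨hk0, h1, h2⟩ := hmemZ k hk
    refine ⟨by positivity, ?_, ?_⟩ <;>
      · rw [haDef, ← Int.cast_abs, ← Int.cast_abs]
        exact_mod_cast by assumption
  set L : ℝ := 2^(-|β|) * a^β with hLdef
  set U : ℝ := 2^(|β|) * a^β with hUdef
  have hLpos : 0 < L := by rw [hLdef]; positivity
  have hUpos : 0 < U := by rw [hUdef]; positivity
  have hwL : ∀ k ∈ Sint m N, L ≤ powerWeight β k := by
    intro k hk
    obtain ⟨hb, h1, h2⟩ := hmemR k hk
    have hk0 : k ≠ 0 := (hmemZ k hk).1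
    rw [powerWeight]; simp only [hk0, if_false]
    exact pw_lb β a _ ha hb h1 h2
  have hwU : ∀ k ∈ Sint m N, powerWeight β k ≤ U := by
    intro k hk
    obtain ⟨hb, h1, h2⟩ := hmemR k hk
    have hk0 : k ≠ 0 := (hmemZ k hk).1
    rw [powerWeight]; simp only [hk0, if_false]
    exact pw_ub β a _ ha hb h1 h2
  have hcard : (Sint m N).card = 2*N+1 := by
    rw [Sint, Int.card_Icc]; omega
  set W : ℝ := wSum (powerWeight β) (Sint m N) with hWdef
  have hWl : L * n ≤ W := by
    rw [hWdef, wSum]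
    calc L * n = (Sint m N).card • L := by
          rw [hcard, nsmul_eq_mul, hnDef]; push_cast; ring
      _ ≤ ∑ k ∈ Sint m N, powerWeight β k := Finset.card_nsmul_le_sum _ _ _ hwL
  have hWu : W ≤ U * n := by
    rw [hWdef, wSum]
    calc (∑ k ∈ Sint m N, powerWeight β k) ≤ (Sint m N).card • U :=
          Finset.sum_le_card_nsmul _ _ _ hwU
      _ = U * n := by rw [hcard, nsmul_eq_mul, hnDef]; push_cast; ring
  have hW : 0 < W := lt_of_lt_of_le (by positivity) hWl
  set A : ℝ := ∑ k ∈ Sint m N, |x k|^p * powerWeight β k with hAdef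
  have hA0 : 0 ≤ A :=
    Finset.sum_nonneg fun k _ => mul_nonneg (by positivity) (pw_nonneg β k)
  have hsup : W ^ (1/q - 1/p) * A ^ (1/p) ≤ M := le_ciSup hBdd (m, N)
  have hM0 : 0 ≤ M := le_trans (by positivity) hsup
  have hA' : A ^ (1/p) ≤ W ^ (1/p - 1/q) * M := by
    have key : W^(1/p-1/q) * W^(1/q-1/p) = 1 := by
      rw [← Real.rpow_add hW, show (1/p-1/q)+(1/q-1/p) = 0 by ring, Real.rpow_zero]
    calc A^(1/p) = W^(1/p-1/q) * (W^(1/q-1/p) * A^(1/p)) := by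
          rw [← mul_assoc, key, one_mul]
      _ ≤ W^(1/p-1/q) * M :=
          mul_le_mul_of_nonneg_left hsup (Real.rpow_nonneg hW.le _)
  have hHold : ∑ k ∈ Sint m N, x k ≤ n ^ (1-1/p) * (∑ k ∈ Sint m N, x k ^ p) ^ (1/p) := by
    have h := Real.inner_le_weight_mul_Lp_of_nonneg (Sint m N) hp.le (fun _ => (1:ℝ)) x
      (fun _ => zero_le_one) hx
    simpa [one_mul, Finset.sum_const, nsmul_eq_mul, hcard, one_div, hnDef] using h
  have hxp : ∑ k ∈ Sint m N, x k ^ p ≤ L⁻¹ * A := by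
    calc ∑ k ∈ Sint m N, x k ^ p
        ≤ ∑ k ∈ Sint m N, L⁻¹ * (|x k|^p * powerWeight β k) := by
          refine Finset.sum_le_sum fun k hk => ?_
          have h1 : x k ^ p = |x k| ^ p := by rw [abs_of_nonneg (hx k)]
          have h2 : |x k|^p * L ≤ |x k|^p * powerWeight β k :=
            mul_le_mul_of_nonneg_left (hwL k hk) (by positivity)
          calc x k ^ p = L⁻¹ * (|x k|^p * L) := by
                rw [h1]; field_simp
            _ ≤ L⁻¹ * (|x k|^p * powerWeight β k) :=
                mul_le_mul_of_nonneg_left h2 (by positivity)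
      _ = L⁻¹ * A := by rw [hAdef, Finset.mul_sum]
  have hxp0 : 0 ≤ ∑ k ∈ Sint m N, x k ^ p :=
    Finset.sum_nonneg fun k _ => Real.rpow_nonneg (hx k) p
  calc n⁻¹ * ∑ k ∈ Sint m N, x k
      ≤ n⁻¹ * (n ^ (1-1/p) * (∑ k ∈ Sint m N, x k ^ p) ^ (1/p)) :=
        mul_le_mul_of_nonneg_left hHold (by positivity)
    _ ≤ n⁻¹ * (n ^ (1-1/p) * (L⁻¹ * A) ^ (1/p)) := by
        have := Real.rpow_le_rpow hxp0 hxp (by positivity : (0:ℝ) ≤ 1/p)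
        gcongr
    _ = n⁻¹ * (n ^ (1-1/p) * ((L⁻¹) ^ (1/p) * A ^ (1/p))) := by
        rw [Real.mul_rpow (by positivity) hA0]
    _ ≤ n⁻¹ * (n ^ (1-1/p) * ((L⁻¹) ^ (1/p) * (W ^ (1/p-1/q) * M))) := by
        gcongr
    _ ≤ n⁻¹ * (n ^ (1-1/p) * ((L⁻¹) ^ (1/p) * ((U * n) ^ (1/p-1/q) * M))) := by
        have := Real.rpow_le_rpow hW.le hWu he.le
        gcongr
    _ = (n⁻¹ * n^(1-1/p) * (L⁻¹)^(1/p) * ((U * n)^(1/p-1/q))) * M := by ring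
    _ = (2:ℝ) ^ (|β| * (1/p) + |β| * (1/p - 1/q)) * a^(-(β/q)) * n^(-(1/q)) * M := by
        rw [hLdef, hUdef, scalar_eq p q β a n ha hn]
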